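/- Every α-paraconvex subset P of a real Hilbert space H (0 ≤ α < 1) is strongly φ(α)-paraconvex, where φ(α) = √(2α - α²): for every open ball D of radius r and every q ∈ conv(P ∩ D), dist(q, P ∩ D) ≤ φ(α)·r. -/

import Mathlib

theorem stmt6 {H : Type*} [NormedAddCommGroup H] [InnerProductSpace ℝ H]
    (P : Set H) (hne : P.Nonempty) (hcl : IsClosed P) (α : ℝ) (hα0 : 0 ≤ α) (hα1 : α < 1)
    (hpara : ∀ (c : H) (r : ℝ), 0 < r →
      ∀ q ∈ convexHull ℝ (P ∩ Metric.ball c r), Metric.infDist q P ≤ α * r) :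
    ∀ (c : H) (r : ℝ), 0 < r →
      ∀ q ∈ convexHull ℝ (P ∩ Metric.ball c r),
        Metric.infDist q (P ∩ Metric.ball c r) ≤ Real.sqrt (2 * α - α ^ 2) * r := by
  intro c r hr q hq
  have hPD : (P ∩ Metric.ball c r).Nonempty := by
    by_contra h
    rw [Set.not_nonempty_iff_eq_empty] at h
    rw [h, convexHull_empty] at hq
    exact hq
  set s : ℝ := ‖q - c‖ with hs
  have hs0 : 0 ≤ s := norm_nonneg _
  have hαr : 0 ≤ 2 * α - α ^ 2 := by nlinarith
  rcases le_or_gt ((1 - α) * r) s with hcase | hcase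
  · -- far case: variance argument
    have key : ∃ x ∈ P ∩ Metric.ball c r, ‖x - q‖ ^ 2 ≤ r ^ 2 - s ^ 2 := by
      by_contra h
      push_neg at h
      have hlin : IsLinearMap ℝ (fun x : H => (inner ℝ x (q - c) : ℝ)) :=
        ⟨fun x y => inner_add_left _ _ _, fun t x => real_inner_smul_left _ _ _⟩
      have hC : Convex ℝ {x : H | (inner ℝ x (q - c) : ℝ) < (inner ℝ q (q - c) : ℝ)} :=
        convex_halfSpace_lt hlin _
      have hsub : P ∩ Metric.ball c r ⊆
          {x : H | (inner ℝ x (q - c) : ℝ) < (inner ℝ q (q - c) : ℝ)} := by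
        intro x hx
        have hxb : ‖x - c‖ < r := by
          rw [← dist_eq_norm]; exact Metric.mem_ball.mp hx.2
        have hxq := h x hx
        have hid : ‖x - c‖ ^ 2 = ‖x - q‖ ^ 2 + 2 * (inner ℝ (x - q) (q - c) : ℝ) + ‖q - c‖ ^ 2 := by
          have := norm_add_sq_real (x - q) (q - c)
          rw [sub_add_sub_cancel] at this
          exact this
        have hneg : (inner ℝ (x - q) (q - c) : ℝ) < 0 := by nlinarith [norm_nonneg (x - c)]
        have h2 : (inner ℝ (x - q) (q - c) : ℝ)
            = (inner ℝ x (q - c) : ℝ) - (inner ℝ q (q - c) : ℝ) := inner_sub_left _ _ _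
        simp only [Set.mem_setOf_eq]
        linarith [h2 ▸ hneg]
      have := convexHull_min hsub hC hq
      exact lt_irrefl ((inner ℝ q (q - c) : ℝ)) this
    obtain ⟨x, hx, hxq⟩ := key
    have h1 : Metric.infDist q (P ∩ Metric.ball c r) ≤ dist q x :=
      Metric.infDist_le_dist_of_mem hx
    have h2 : dist q x ^ 2 ≤ (2 * α - α ^ 2) * r ^ 2 := by
      rw [dist_eq_norm, norm_sub_rev]
      nlinarith [mul_le_mul hcase hcase (mul_nonneg (by linarith) hr.le) hs0]
    calc Metric.infDist q (P ∩ Metric.ball c r) ≤ dist q x := h1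
      _ ≤ Real.sqrt ((2 * α - α ^ 2) * r ^ 2) := by
          rw [Real.le_sqrt dist_nonneg (by positivity)]
          exact h2
      _ = Real.sqrt (2 * α - α ^ 2) * r := by
          rw [Real.sqrt_mul hαr, Real.sqrt_sq hr.le]
  · -- near case: nearest point of P is inside the ball
    have hd : Metric.infDist q P ≤ α * r := hpara c r hr q hq
    have hle : Metric.infDist q (P ∩ Metric.ball c r) ≤ α * r := by
      refine le_of_forall_pos_le_add fun ε hε => ?_
      set δ : ℝ := min ε (((1 - α) * r - s) / 2) with hδ
      have hδ0 : 0 < δ := lt_min hε (by linarith)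
      have hδ1 : δ ≤ ε := min_le_left _ _
      have hδ2 : δ ≤ ((1 - α) * r - s) / 2 := min_le_right _ _
      have hlt : Metric.infDist q P < α * r + δ := lt_of_le_of_lt hd (by linarith)
      obtain ⟨p, hp, hpd⟩ := (Metric.infDist_lt_iff hne).mp hlt
      have hpball : p ∈ Metric.ball c r := by
        rw [Metric.mem_ball]
        have : dist p c ≤ dist p q + dist q c := dist_triangle _ _ _
        have hqc : dist q c = s := by rw [dist_eq_norm]
        have hpq : dist p q < α * r + δ := by rwa [dist_comm]
        linarith
      have : Metric.infDist q (P ∩ Metric.ball c r) ≤ dist q p :=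
        Metric.infDist_le_dist_of_mem ⟨hp, hpball⟩
      linarith
    have hfin : α * r ≤ Real.sqrt (2 * α - α ^ 2) * r := by
      have : α ≤ Real.sqrt (2 * α - α ^ 2) := by
        rw [Real.le_sqrt hα0 hαr]
        nlinarith
      exact mul_le_mul_of_nonneg_right this hr.le
    linarith
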